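/- A word w over Σ is k-universal if and only if w can be factored as w = w_1 w_2 ... w_k u where each w_i satisfies alph(w_i) = Σ. -/

import Mathlib

private lemma split_arch {α : Type*} [Fintype α] [Nonempty α] (w : List α) (k : ℕ)
    (h : ∀ x : List α, x.length = k + 1 → x.Sublist w) :
    ∃ p r : List α, w = p ++ r ∧ (∀ a : α, a ∈ p) ∧
      ∀ x : List α, x.length = k → x.Sublist r := by
  classical
  obtain ⟨a₀, -, ha₀⟩ := Finset.exists_max_image Finset.univ
    (fun a => List.idxOf a w) ⟨Classical.arbitrary α, Finset.mem_univ _⟩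
  have hmem : ∀ a : α, a ∈ w := fun a =>
    (h (a :: List.replicate k a₀) (by simp)).subset (List.mem_cons_self)
  set N := List.idxOf a₀ w + 1 with hNdef
  have hNle : N ≤ w.length := List.idxOf_lt_length_iff.mpr (hmem a₀)
  refine ⟨w.take N, w.drop N, (List.take_append_drop N w).symm, ?_, ?_⟩
  · intro a
    have hia : List.idxOf a w < w.length := List.idxOf_lt_length_iff.mpr (hmem a)
    have hiN : List.idxOf a w < N := Nat.lt_succ_of_le (ha₀ a (Finset.mem_univ a))
    have hlt : List.idxOf a w < (w.take N).length := by
      simpa [List.length_take] using lt_min hiN hia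
    have : (w.take N)[List.idxOf a w] = a := by
      rw [List.getElem_take]; exact List.getElem_idxOf hia
    exact this ▸ List.getElem_mem hlt
  · intro x hx
    obtain ⟨r₁, r₂, hw, ha₀r₁, hxr₂⟩ :=
      List.cons_sublist_iff.mp (h (a₀ :: x) (by simp [hx]))
    have hNr₁ : N ≤ r₁.length := by
      have : List.idxOf a₀ w = List.idxOf a₀ r₁ := by
        rw [hw]; exact List.idxOf_append_of_mem ha₀r₁
      have := List.idxOf_lt_length_iff.mpr ha₀r₁
      omega
    have hr₂ : r₂ = List.drop (r₁.length - N) (List.drop N w) := by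
      rw [List.drop_drop, Nat.add_sub_cancel' hNr₁, hw, List.drop_left]
    exact (hr₂ ▸ hxr₂).trans (List.drop_sublist _ _)

private lemma join_sublist {α : Type*} (ws : List (List α))
    (hws : ∀ v ∈ ws, ∀ a : α, a ∈ v) :
    ∀ (u x : List α), x.length = ws.length → x.Sublist (ws.flatten ++ u) := by
  induction ws with
  | nil => intro u x hx; simp at hx; simp [hx]
  | cons v ws ih =>
    intro u x hx
    cases x with
    | nil => simp at hx
    | cons b x =>
      simp only [List.length_cons, Nat.succ.injEq] at hx
      have h1 : x.Sublist (ws.flatten ++ u) :=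
        ih (fun v hv => hws v (List.mem_cons_of_mem _ hv)) u x hx
      refine List.cons_sublist_iff.mpr ⟨v, ws.flatten ++ u, ?_, hws v (List.mem_cons_self) b, h1⟩
      simp

/-- w is k-universal iff w = w₁ w₂ ⋯ w_k u where each w_i contains every letter
of the alphabet. -/
theorem universal_iff_factorisation {α : Type*} [Fintype α] [Nonempty α]
    (w : List α) (k : ℕ) :
    (∀ x : List α, x.length = k → x.Sublist w) ↔
      ∃ (ws : List (List α)) (u : List α),
        ws.length = k ∧ (∀ v ∈ ws, ∀ a : α, a ∈ v) ∧ w = ws.flatten ++ u := by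
  constructor
  · intro h
    induction k generalizing w with
    | zero => exact ⟨[], w, rfl, by simp, by simp⟩
    | succ k ih =>
      obtain ⟨p, r, hw, hp, hr⟩ := split_arch w k h
      obtain ⟨ws, u, hlen, hws, hru⟩ := ih r hr
      exact ⟨p :: ws, u, by simp [hlen], by
        intro v hv
        rcases List.mem_cons.mp hv with h | h
        · exact h ▸ hp
        · exact hws v h, by simp [hw, hru]⟩
  · rintro ⟨ws, u, hlen, hws, rfl⟩ x hx
    exact join_sublist ws hws u x (hx.trans hlen.symm)
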